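/- For even n, the quotient of S^1 × S^{n-1} by the diagonal antipodal ℤ/2-action is homeomorphic to S^1 × S^{n-1}. -/

import Mathlib

/-- The relation identifying `(z, x)` with `(-z, -x)` on `S¹ × S^{n-1}`; the quotient by the
equivalence relation it generates is exactly the quotient by the diagonal antipodal
`ℤ/2`-action. -/
def lieRel (n : ℕ) :
    (Metric.sphere (0 : ℂ) 1 × Metric.sphere (0 : EuclideanSpace ℝ (Fin n)) 1) →
    (Metric.sphere (0 : ℂ) 1 × Metric.sphere (0 : EuclideanSpace ℝ (Fin n)) 1) → Prop :=
  fun a b => ((b.1 : ℂ) = -(a.1 : ℂ)) ∧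
    ((b.2 : EuclideanSpace ℝ (Fin n)) = -(a.2 : EuclideanSpace ℝ (Fin n)))

/-- The quotient of `S¹ × S^{n-1}` by the diagonal antipodal `ℤ/2`-action. -/
def LieQuot (n : ℕ) : Type := Quot (lieRel n)

noncomputable instance (n : ℕ) : TopologicalSpace (LieQuot n) := instTopologicalSpaceQuot

section Aux

variable {n m : ℕ} (E : PiLp 2 (fun _ : Fin m => ℂ) ≃ₗᵢ[ℝ] EuclideanSpace ℝ (Fin n))

noncomputable def lieA (z : ℂ) (x : EuclideanSpace ℝ (Fin n)) : EuclideanSpace ℝ (Fin n) :=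
  E (z • E.symm x)

theorem lieA_norm (z : ℂ) (x : EuclideanSpace ℝ (Fin n)) : ‖lieA E z x‖ = ‖z‖ * ‖x‖ := by
  rw [lieA, E.norm_map, norm_smul, E.symm.norm_map]

theorem lieA_neg_left (z : ℂ) (x : EuclideanSpace ℝ (Fin n)) :
    lieA E (-z) x = -(lieA E z x) := by
  rw [lieA, lieA, neg_smul, map_neg]

theorem lieA_neg_right (z : ℂ) (x : EuclideanSpace ℝ (Fin n)) :
    lieA E z (-x) = -(lieA E z x) := by
  rw [lieA, lieA, map_neg, smul_neg, map_neg]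

theorem lieA_mul (z w : ℂ) (x : EuclideanSpace ℝ (Fin n)) :
    lieA E z (lieA E w x) = lieA E (z * w) x := by
  rw [lieA, lieA, lieA, E.symm_apply_apply, smul_smul]

theorem lieA_one (x : EuclideanSpace ℝ (Fin n)) : lieA E 1 x = x := by
  rw [lieA, one_smul, E.apply_symm_apply]

theorem lieA_cont : Continuous (fun p : ℂ × EuclideanSpace ℝ (Fin n) => lieA E p.1 p.2) :=
  E.continuous.comp (continuous_fst.smul (E.symm.continuous.comp continuous_snd))

theorem lieA_inj {z : ℂ} (hz : z ≠ 0) {x y : EuclideanSpace ℝ (Fin n)}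
    (h : lieA E z x = lieA E z y) : x = y := by
  have := E.injective h
  have h2 : E.symm x = E.symm y := smul_right_injective _ hz this
  exact E.symm.injective h2

/-- The downstairs map `F (z, x) = (z * z, z • x)`. -/
noncomputable def lieF :
    (Metric.sphere (0 : ℂ) 1 × Metric.sphere (0 : EuclideanSpace ℝ (Fin n)) 1) →
    (Metric.sphere (0 : ℂ) 1 × Metric.sphere (0 : EuclideanSpace ℝ (Fin n)) 1) :=
  fun p =>
    (⟨(p.1 : ℂ) * (p.1 : ℂ), by
        rw [mem_sphere_zero_iff_norm, norm_mul]
        have h1 : ‖(p.1 : ℂ)‖ = 1 := mem_sphere_zero_iff_norm.mp p.1.2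
        rw [h1]; norm_num⟩,
     ⟨lieA E (p.1 : ℂ) (p.2 : EuclideanSpace ℝ (Fin n)), by
        rw [mem_sphere_zero_iff_norm, lieA_norm,
          mem_sphere_zero_iff_norm.mp p.1.2, mem_sphere_zero_iff_norm.mp p.2.2]
        norm_num⟩)

theorem lieF_rel {a b} (h : lieRel n a b) : lieF E a = lieF E b := by
  obtain ⟨h1, h2⟩ := h
  apply Prod.ext
  · apply Subtype.ext
    show (a.1 : ℂ) * (a.1 : ℂ) = (b.1 : ℂ) * (b.1 : ℂ)
    rw [h1]; ring
  · apply Subtype.ext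
    show lieA E (a.1 : ℂ) (a.2 : _) = lieA E (b.1 : ℂ) (b.2 : _)
    rw [h1, h2, lieA_neg_left, lieA_neg_right, neg_neg]

theorem lieAux (E : PiLp 2 (fun _ : Fin m => ℂ) ≃ₗᵢ[ℝ] EuclideanSpace ℝ (Fin n)) : Nonempty (LieQuot n ≃ₜ
    (Metric.sphere (0 : ℂ) 1 × Metric.sphere (0 : EuclideanSpace ℝ (Fin n)) 1)) := by
  let G : LieQuot n → _ := Quot.lift (lieF E) (fun a b h => lieF_rel E h)
  have hGcont : Continuous G := continuous_quot_lift _ (by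
    apply Continuous.prodMk
    · exact (((continuous_subtype_val.comp continuous_fst).mul
        (continuous_subtype_val.comp continuous_fst))).subtype_mk _
    · exact ((lieA_cont E).comp
        ((continuous_subtype_val.comp continuous_fst).prodMk
          (continuous_subtype_val.comp continuous_snd))).subtype_mk _)
  have hinj : Function.Injective G := by
    intro a b
    obtain ⟨a, rfl⟩ := Quot.exists_rep a
    obtain ⟨b, rfl⟩ := Quot.exists_rep b
    intro h
    have h' : lieF E a = lieF E b := h
    have h1 : (a.1 : ℂ) * a.1 = (b.1 : ℂ) * b.1 := congrArg (fun p => (p.1 : ℂ)) h'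
    have h2 : lieA E (a.1 : ℂ) (a.2 : _) = lieA E (b.1 : ℂ) (b.2 : _) :=
      congrArg (fun p => (p.2 : EuclideanSpace ℝ (Fin n))) h'
    have hane : (a.1 : ℂ) ≠ 0 := by
      intro h0
      have := mem_sphere_zero_iff_norm.mp a.1.2
      rw [h0] at this; simp at this
    rcases mul_self_eq_mul_self_iff.mp h1 with hc | hc
    · have hx : (a.2 : EuclideanSpace ℝ (Fin n)) = b.2 := by
        apply lieA_inj E hane
        rw [h2, hc]
      have : a = b := Prod.ext (Subtype.ext hc) (Subtype.ext hx)
      rw [this]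
    · apply Quot.sound
      refine ⟨?_, ?_⟩
      · show (b.1 : ℂ) = -(a.1 : ℂ)
        rw [hc]; ring
      · show (b.2 : EuclideanSpace ℝ (Fin n)) = -(a.2 : _)
        apply neg_eq_iff_eq_neg.mp
        apply lieA_inj E hane
        rw [h2, lieA_neg_right, hc, lieA_neg_left, neg_neg]
  have hsurj : Function.Surjective G := by
    rintro ⟨w, y⟩
    have hwn : ‖(w : ℂ)‖ = 1 := mem_sphere_zero_iff_norm.mp w.2
    have hw0 : (w : ℂ) ≠ 0 := by intro h0; rw [h0] at hwn; simp at hwn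
    set z : ℂ := Complex.exp (Complex.log w / 2) with hz
    have hzz : z * z = (w : ℂ) := by
      rw [hz, ← Complex.exp_add]
      rw [show Complex.log w / 2 + Complex.log w / 2 = Complex.log w by ring]
      exact Complex.exp_log hw0
    have hzn : ‖z‖ = 1 := by
      rw [hz, Complex.norm_exp]
      have : (Complex.log w / 2).re = 0 := by
        rw [show (2 : ℂ) = ((2 : ℝ) : ℂ) by norm_num, Complex.div_ofReal_re, Complex.log_re,
          hwn]
        simp
      rw [this, Real.exp_zero]
    have hz0 : z ≠ 0 := by intro h0; rw [h0] at hzn; simp at hzn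
    have hzc : z * (starRingEnd ℂ) z = 1 := by
      rw [Complex.mul_conj]
      norm_cast
      rw [Complex.normSq_eq_norm_sq, hzn]; norm_num
    set x : EuclideanSpace ℝ (Fin n) := lieA E ((starRingEnd ℂ) z) (y : _) with hx
    have hxn : ‖x‖ = 1 := by
      rw [hx, lieA_norm, RCLike.norm_conj, hzn, mem_sphere_zero_iff_norm.mp y.2]
      norm_num
    refine ⟨Quot.mk _ (⟨z, mem_sphere_zero_iff_norm.mpr hzn⟩,
      ⟨x, mem_sphere_zero_iff_norm.mpr hxn⟩), ?_⟩
    show lieF E _ = (w, y)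
    apply Prod.ext
    · exact Subtype.ext hzz
    · apply Subtype.ext
      show lieA E z x = (y : EuclideanSpace ℝ (Fin n))
      rw [hx, lieA_mul, hzc, lieA_one]
  have : CompactSpace (LieQuot n) := Quot.compactSpace (r := lieRel n)
  exact ⟨(Continuous.homeoOfEquivCompactToT2
    (f := Equiv.ofBijective G ⟨hinj, hsurj⟩) hGcont)⟩

end Aux

/-- For even `n`, the quotient of `S¹ × S^{n-1}` by the diagonal antipodal `ℤ/2`-action is
homeomorphic to `S¹ × S^{n-1}`. -/
theorem lieQuot_homeomorph_of_even (n : ℕ) (hn : Even n) :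
    Nonempty (LieQuot n ≃ₜ
      (Metric.sphere (0 : ℂ) 1 × Metric.sphere (0 : EuclideanSpace ℝ (Fin n)) 1)) := by
  obtain ⟨m, hm⟩ := hn
  let B : OrthonormalBasis (Fin m × Fin 2) ℝ (PiLp 2 fun _ : Fin m => ℂ) :=
    (Pi.orthonormalBasis fun _ => Complex.orthonormalBasisOneI).reindex
      (Equiv.sigmaEquivProd _ _)
  let E : PiLp 2 (fun _ : Fin m => ℂ) ≃ₗᵢ[ℝ] EuclideanSpace ℝ (Fin n) :=
    (B.reindex (finProdFinEquiv.trans (finCongr (by omega)))).repr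
  exact lieAux E
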